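/- Let D ⊆ ℂⁿ be a bounded balanced pseudoconvex domain all of whose boundary points are holomorphically extreme, and let ρ: D → D be a holomorphic retraction with ρ(0) = 0. Then ρ(D) = D ∩ V, where V = {v ∈ ℂⁿ : ρ'(0)v = v}; in particular, the image of ρ is the intersection of D with a complex-linear subspace. -/

import Mathlib

/-- `u` is plurisubharmonic on `D`: upper semi-continuous on `D` and satisfying the
sub-mean-value inequality on every complex line. -/
def PlurisubharmonicOn {n : ℕ} (u : (Fin n → ℂ) → ℝ) (D : Set (Fin n → ℂ)) : Prop :=
  UpperSemicontinuousOn u D ∧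
  ∀ z ∈ D, ∀ w : Fin n → ℂ, ∀ r : ℝ, 0 < r →
    (∀ l : ℂ, ‖l‖ ≤ r → z + l • w ∈ D) →
    u z ≤ (2 * Real.pi)⁻¹ *
      ∫ θ in (0:ℝ)..(2 * Real.pi), u (z + ((r : ℂ) * Complex.exp ((θ : ℂ) * Complex.I)) • w)

/-- `D` is pseudoconvex: `-log dist(·, ∂D)` is plurisubharmonic on `D`. -/
def Pseudoconvex {n : ℕ} (D : Set (Fin n → ℂ)) : Prop :=
  PlurisubharmonicOn (fun z => -Real.log (Metric.infDist z Dᶜ)) D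

open Metric Set

noncomputable def mink {n : ℕ} (D : Set (Fin n → ℂ)) (z : Fin n → ℂ) : ℝ :=
  sInf {t : ℝ | 0 < t ∧ (t : ℂ)⁻¹ • z ∈ D}

section
variable {n : ℕ} {D : Set (Fin n → ℂ)}

lemma mink_set_nonempty (hDo : IsOpen D) (h0 : (0:Fin n → ℂ) ∈ D) (z : Fin n → ℂ) :
    {t : ℝ | 0 < t ∧ (t : ℂ)⁻¹ • z ∈ D}.Nonempty := by
  rcases Metric.isOpen_iff.1 hDo 0 h0 with ⟨ε, hε, hball⟩
  by_cases hz : z = 0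
  · exact ⟨1, one_pos, by simp [hz, h0]⟩
  · have hzn : (0:ℝ) < ‖z‖ := norm_pos_iff.2 hz
    refine ⟨2 * ‖z‖ / ε, by positivity, hball ?_⟩
    rw [mem_ball_zero_iff, norm_smul]
    have h1 : ‖((2 * ‖z‖ / ε : ℝ) : ℂ)⁻¹‖ = (2 * ‖z‖ / ε)⁻¹ := by
      rw [norm_inv, Complex.norm_real, Real.norm_eq_abs, abs_of_pos (by positivity)]
    rw [h1]
    have h2 : (2 * ‖z‖ / ε)⁻¹ * ‖z‖ = ε / 2 := by field_simp
    rw [h2]; linarith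

lemma mink_bddBelow (z : Fin n → ℂ) :
    BddBelow {t : ℝ | 0 < t ∧ (t : ℂ)⁻¹ • z ∈ D} :=
  ⟨0, fun t ht => le_of_lt ht.1⟩

lemma mink_nonneg (hDo : IsOpen D) (h0 : (0:Fin n → ℂ) ∈ D) (z : Fin n → ℂ) :
    0 ≤ mink D z :=
  le_csInf (mink_set_nonempty hDo h0 z) (fun t ht => le_of_lt ht.1)

lemma mink_lt_iff (hDo : IsOpen D) (h0 : (0:Fin n → ℂ) ∈ D)
    (hbal : ∀ z ∈ D, ∀ l : ℂ, ‖l‖ ≤ 1 → l • z ∈ D)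
    (z : Fin n → ℂ) {t : ℝ} (ht : 0 < t) :
    mink D z < t ↔ (t : ℂ)⁻¹ • z ∈ D := by
  constructor
  · intro h
    obtain ⟨t', ⟨ht'pos, ht'mem⟩, ht't⟩ :=
      (csInf_lt_iff (mink_bddBelow z) (mink_set_nonempty hDo h0 z)).1 h
    have : ((t':ℝ) / t : ℂ) • ((t' : ℂ)⁻¹ • z) = (t : ℂ)⁻¹ • z := by
      rw [smul_smul]
      congr 1
      have h1 : (t' : ℂ) ≠ 0 := by exact_mod_cast ne_of_gt ht'pos
      have h2 : (t : ℂ) ≠ 0 := by exact_mod_cast ne_of_gt ht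
      field_simp
    rw [← this]
    refine hbal _ ht'mem _ ?_
    rw [norm_div, Complex.norm_real, Complex.norm_real, Real.norm_eq_abs, Real.norm_eq_abs,
      abs_of_pos ht'pos, abs_of_pos ht, div_le_one ht]
    exact le_of_lt ht't
  · intro h
    have hc : ContinuousAt (fun s : ℝ => ((s : ℂ)⁻¹ • z : Fin n → ℂ)) t := by
      have : (t : ℂ) ≠ 0 := by exact_mod_cast ne_of_gt ht
      exact ((Complex.continuous_ofReal.continuousAt).inv₀ this).smul continuousAt_const
    have := hc.preimage_mem_nhds (hDo.mem_nhds h)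
    rcases Metric.mem_nhds_iff.1 this with ⟨δ, hδ, hsub⟩
    set t' := t - min δ t / 2 with ht'def
    have h1 : 0 < min δ t := lt_min hδ ht
    have ht'pos : 0 < t' := by
      have : min δ t ≤ t := min_le_right _ _
      simp only [ht'def]; linarith
    have ht'ball : t' ∈ Metric.ball t δ := by
      rw [Metric.mem_ball, Real.dist_eq, ht'def]
      have : min δ t ≤ δ := min_le_left _ _
      rw [abs_of_nonpos (by linarith)]
      linarith
    have ht'mem : (t' : ℂ)⁻¹ • z ∈ D := hsub ht'ball
    have : mink D z ≤ t' := csInf_le (mink_bddBelow z) ⟨ht'pos, ht'mem⟩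
    have ht'lt : t' < t := by simp only [ht'def]; linarith
    linarith

lemma mink_mem_iff (hDo : IsOpen D) (h0 : (0:Fin n → ℂ) ∈ D)
    (hbal : ∀ z ∈ D, ∀ l : ℂ, ‖l‖ ≤ 1 → l • z ∈ D) (z : Fin n → ℂ) :
    z ∈ D ↔ mink D z < 1 := by
  rw [mink_lt_iff hDo h0 hbal z one_pos]
  norm_num

lemma mem_unimodular_iff (hbal : ∀ z ∈ D, ∀ l : ℂ, ‖l‖ ≤ 1 → l • z ∈ D)
    {u : ℂ} (hu : ‖u‖ = 1) (z : Fin n → ℂ) : u • z ∈ D ↔ z ∈ D := by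
  have hu0 : u ≠ 0 := by intro h; rw [h] at hu; simp at hu
  constructor
  · intro h
    have : u⁻¹ • (u • z) = z := by rw [smul_smul, inv_mul_cancel₀ hu0, one_smul]
    rw [← this]
    exact hbal _ h _ (by rw [norm_inv, hu]; norm_num)
  · intro h
    exact hbal _ h _ (le_of_eq hu)

lemma mink_zero (hDo : IsOpen D) (h0 : (0:Fin n → ℂ) ∈ D)
    (hbal : ∀ z ∈ D, ∀ l : ℂ, ‖l‖ ≤ 1 → l • z ∈ D) : mink D 0 = 0 := by
  refine le_antisymm ?_ (mink_nonneg hDo h0 0)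
  by_contra h
  push_neg at h
  have := (mink_lt_iff hDo h0 hbal 0 h).2 (by simpa using h0)
  exact lt_irrefl _ this

lemma mink_smul (hDo : IsOpen D) (h0 : (0:Fin n → ℂ) ∈ D)
    (hbal : ∀ z ∈ D, ∀ l : ℂ, ‖l‖ ≤ 1 → l • z ∈ D)
    (c : ℂ) (z : Fin n → ℂ) : mink D (c • z) = ‖c‖ * mink D z := by
  rcases eq_or_ne c 0 with rfl | hc
  · simp [mink_zero hDo h0 hbal]
  have hcn : 0 < ‖c‖ := norm_pos_iff.2 hc
  have key : ∀ t : ℝ, 0 < t → (mink D (c • z) < t ↔ ‖c‖ * mink D z < t) := by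
    intro t ht
    rw [mink_lt_iff hDo h0 hbal _ ht]
    have h2 : 0 < t / ‖c‖ := by positivity
    have h3 : ‖c‖ * mink D z < t ↔ mink D z < t / ‖c‖ := by
      rw [lt_div_iff₀ hcn, mul_comm]
    rw [h3, mink_lt_iff hDo h0 hbal _ h2]
    have hu : ‖c / (‖c‖ : ℂ)‖ = 1 := by
      rw [norm_div, Complex.norm_real, Real.norm_eq_abs, abs_of_pos hcn,
        div_self (ne_of_gt hcn)]
    rw [← mem_unimodular_iff hbal hu (((t / ‖c‖ : ℝ) : ℂ)⁻¹ • z)]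
    have : (c / (‖c‖ : ℂ)) • ((t / ‖c‖ : ℝ) : ℂ)⁻¹ • z = (t : ℂ)⁻¹ • (c • z) := by
      rw [smul_smul, smul_smul]
      congr 1
      have h4 : ((‖c‖ : ℝ) : ℂ) ≠ 0 := by exact_mod_cast ne_of_gt hcn
      have h5 : (t : ℂ) ≠ 0 := by exact_mod_cast ne_of_gt ht
      push_cast
      field_simp
    rw [this]
  have hnn1 : 0 ≤ mink D (c • z) := mink_nonneg hDo h0 _
  have hnn2 : 0 ≤ ‖c‖ * mink D z := by
    have := mink_nonneg hDo h0 z; positivity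
  refine le_antisymm ?_ ?_
  · by_contra h
    push_neg at h
    have ht : 0 < mink D (c • z) := lt_of_le_of_lt hnn2 h
    exact lt_irrefl _ ((key _ ht).2 h)
  · by_contra h
    push_neg at h
    have ht : 0 < ‖c‖ * mink D z := lt_of_le_of_lt hnn1 h
    exact lt_irrefl _ ((key _ ht).1 h)

lemma mink_pos (hDo : IsOpen D) (h0 : (0:Fin n → ℂ) ∈ D)
    (hbal : ∀ z ∈ D, ∀ l : ℂ, ‖l‖ ≤ 1 → l • z ∈ D)
    {R : ℝ} (hR : 0 < R) (hDR : D ⊆ Metric.ball 0 R)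
    {z : Fin n → ℂ} (hz : z ≠ 0) : 0 < mink D z := by
  have hzn : 0 < ‖z‖ := norm_pos_iff.2 hz
  by_contra h
  push_neg at h
  have hlt : mink D z < ‖z‖ / R := lt_of_le_of_lt h (by positivity)
  have := (mink_lt_iff hDo h0 hbal z (by positivity)).1 hlt
  have hmem := hDR this
  rw [mem_ball_zero_iff, norm_smul, norm_inv, Complex.norm_real, Real.norm_eq_abs,
    abs_of_pos (show (0:ℝ) < ‖z‖ / R by positivity)] at hmem
  rw [inv_mul_eq_div, div_div_eq_mul_div, div_lt_iff₀ hzn] at hmem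
  nlinarith

lemma mink_eq_zero_iff (hDo : IsOpen D) (h0 : (0:Fin n → ℂ) ∈ D)
    (hbal : ∀ z ∈ D, ∀ l : ℂ, ‖l‖ ≤ 1 → l • z ∈ D)
    {R : ℝ} (hR : 0 < R) (hDR : D ⊆ Metric.ball 0 R)
    {z : Fin n → ℂ} : mink D z = 0 ↔ z = 0 := by
  constructor
  · intro h
    by_contra hz
    exact ne_of_gt (mink_pos hDo h0 hbal hR hDR hz) h
  · rintro rfl; exact mink_zero hDo h0 hbal

lemma smul_mem_closure (hbal : ∀ z ∈ D, ∀ l : ℂ, ‖l‖ ≤ 1 → l • z ∈ D)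
    {c : ℂ} (hc : ‖c‖ ≤ 1) {z : Fin n → ℂ} (hz : z ∈ closure D) :
    c • z ∈ closure D := by
  have h1 : c • z ∈ (fun w : Fin n → ℂ => c • w) '' closure D := ⟨z, hz, rfl⟩
  have h2 : (fun w : Fin n → ℂ => c • w) '' closure D ⊆
      closure ((fun w : Fin n → ℂ => c • w) '' D) :=
    image_closure_subset_closure_image (continuous_const_smul c)
  refine closure_mono ?_ (h2 h1)
  rintro _ ⟨w, hw, rfl⟩
  exact hbal _ hw _ hc

lemma le_one_mem_closure (hDo : IsOpen D) (h0 : (0:Fin n → ℂ) ∈ D)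
    (hbal : ∀ z ∈ D, ∀ l : ℂ, ‖l‖ ≤ 1 → l • z ∈ D)
    {z : Fin n → ℂ} (hz : mink D z ≤ 1) : z ∈ closure D := by
  have hseq : Filter.Tendsto (fun k : ℕ => ((1 - ((k:ℝ)+2)⁻¹ : ℝ) : ℂ) • z)
      Filter.atTop (nhds z) := by
    have h1 : Filter.Tendsto (fun k : ℕ => (1 - ((k:ℝ)+2)⁻¹ : ℝ)) Filter.atTop (nhds 1) := by
      have h2 : Filter.Tendsto (fun k : ℕ => ((k:ℝ)+2)⁻¹) Filter.atTop (nhds 0) := by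
        apply Filter.Tendsto.inv_tendsto_atTop
        exact Filter.tendsto_atTop_add_const_right _ 2 tendsto_natCast_atTop_atTop
      simpa using (tendsto_const_nhds (x := (1:ℝ))).sub h2
    have h3 : Filter.Tendsto (fun k : ℕ => ((1 - ((k:ℝ)+2)⁻¹ : ℝ) : ℂ)) Filter.atTop
        (nhds 1) := by
      have := (Complex.continuous_ofReal.tendsto 1).comp h1
      exact this
    have := h3.smul_const z
    simpa using this
  refine mem_closure_of_tendsto hseq (Filter.Eventually.of_forall fun k => ?_)
  rw [mink_mem_iff hDo h0 hbal, mink_smul hDo h0 hbal]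
  have hk : (0:ℝ) < ((k:ℝ)+2)⁻¹ := by positivity
  have hk1 : ((k:ℝ)+2)⁻¹ < 1 := by
    rw [inv_lt_one_iff₀]; right; linarith [Nat.cast_nonneg (α := ℝ) k]
  have hnorm : ‖((1 - ((k:ℝ)+2)⁻¹ : ℝ) : ℂ)‖ = 1 - ((k:ℝ)+2)⁻¹ := by
    rw [Complex.norm_real, Real.norm_eq_abs, abs_of_pos (by linarith)]
  rw [hnorm]
  have hmn : 0 ≤ mink D z := mink_nonneg hDo h0 z
  nlinarith

lemma closure_subset_le_one (hDo : IsOpen D) (h0 : (0:Fin n → ℂ) ∈ D)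
    (hbal : ∀ z ∈ D, ∀ l : ℂ, ‖l‖ ≤ 1 → l • z ∈ D)
    {R : ℝ} (hR : 0 < R) (hDR : D ⊆ Metric.ball 0 R)
    (hext : ∀ a ∈ frontier D, ∀ φ : ℂ → (Fin n → ℂ),
      DifferentiableOn ℂ φ (Metric.ball 0 1) →
      Set.MapsTo φ (Metric.ball 0 1) (closure D) → φ 0 = a →
      ∀ x ∈ Metric.ball (0 : ℂ) 1, φ x = a)
    {z : Fin n → ℂ} (hz : z ∈ closure D) : mink D z ≤ 1 := by
  by_contra h
  push_neg at h
  set m := mink D z with hm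
  have hm1 : 1 < m := h
  have hmpos : 0 < m := lt_trans one_pos hm1
  have hz0 : z ≠ 0 := by
    intro hz0
    rw [hz0, mink_zero hDo h0 hbal] at hm
    linarith [hm ▸ hm1]
  set a := ((m : ℝ) : ℂ)⁻¹ • z with ha
  have hainv : ‖((m : ℝ) : ℂ)⁻¹‖ = m⁻¹ := by
    rw [norm_inv, Complex.norm_real, Real.norm_eq_abs, abs_of_pos hmpos]
  have haD : a ∉ D := by
    rw [mink_mem_iff hDo h0 hbal, ha, mink_smul hDo h0 hbal, hainv, ← hm,
      inv_mul_cancel₀ (ne_of_gt hmpos)]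
    exact lt_irrefl 1
  have hacl : a ∈ closure D :=
    smul_mem_closure hbal (by rw [hainv]; rw [inv_le_one_iff₀]; right; linarith) hz
  have hafr : a ∈ frontier D := by
    rw [frontier, hDo.interior_eq]
    exact ⟨hacl, haD⟩
  set c : ℂ → ℂ := fun lam => ((m : ℝ) : ℂ)⁻¹ + (1 - ((m : ℝ) : ℂ)⁻¹) * (lam / 2) with hc
  set φ : ℂ → (Fin n → ℂ) := fun lam => c lam • z with hφ
  have hcmaps : ∀ lam ∈ Metric.ball (0:ℂ) 1, ‖c lam‖ ≤ 1 := by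
    intro lam hlam
    rw [mem_ball_zero_iff] at hlam
    have hminv : (0:ℝ) < m⁻¹ := by positivity
    have hminv1 : m⁻¹ < 1 := by rw [inv_lt_one_iff₀]; right; exact hm1
    have h1 : ‖(1 - ((m : ℝ) : ℂ)⁻¹)‖ = 1 - m⁻¹ := by
      have : (1 - ((m : ℝ) : ℂ)⁻¹) = (((1 - m⁻¹ : ℝ)) : ℂ) := by push_cast; ring
      rw [this, Complex.norm_real, Real.norm_eq_abs, abs_of_pos (by linarith)]
    calc ‖c lam‖ ≤ ‖((m : ℝ) : ℂ)⁻¹‖ + ‖(1 - ((m : ℝ) : ℂ)⁻¹) * (lam / 2)‖ :=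
          norm_add_le _ _
      _ ≤ m⁻¹ + (1 - m⁻¹) * (1 / 2) := by
          rw [hainv, norm_mul, h1]
          have hl : ‖lam / 2‖ ≤ 1 / 2 := by
            rw [norm_div]
            simp only [Complex.norm_ofNat]
            linarith
          nlinarith [norm_nonneg (lam / 2)]
      _ ≤ 1 := by nlinarith
  have hφdiff : DifferentiableOn ℂ φ (Metric.ball 0 1) :=
    (((differentiable_const _).add ((differentiable_const _).mul
      (differentiable_id.div_const 2))).smul_const z).differentiableOn
  have hφmaps : Set.MapsTo φ (Metric.ball 0 1) (closure D) :=
    fun lam hlam => smul_mem_closure hbal (hcmaps lam hlam) hz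
  have hφ0 : φ 0 = a := by
    simp only [hφ, hc, ha]
    norm_num
  have hhalf : (1/2 : ℂ) ∈ Metric.ball (0:ℂ) 1 := by
    rw [mem_ball_zero_iff]
    rw [show ((1:ℂ)/2) = ((1/2 : ℝ) : ℂ) by norm_num, Complex.norm_real]
    rw [Real.norm_eq_abs, abs_of_pos (by norm_num : (0:ℝ) < 1/2)]
    norm_num
  have heq := hext a hafr φ hφdiff hφmaps hφ0 (1/2) hhalf
  have hsub' : φ (1/2) - a = 0 := by rw [heq, sub_self]
  have hsub : (c (1/2) - ((m : ℝ) : ℂ)⁻¹) • z = 0 := by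
    rw [sub_smul]; exact hsub'
  have hscal : c (1/2) - ((m : ℝ) : ℂ)⁻¹ ≠ 0 := by
    simp only [hc]
    have hm1' : ((m : ℝ) : ℂ)⁻¹ ≠ 1 := by
      intro hcon
      have h1 : ((m : ℝ) : ℂ) = 1 := inv_eq_one.1 hcon
      have h2 : (m : ℝ) = 1 := by exact_mod_cast h1
      linarith
    intro hcon
    apply hm1'
    have : (1 - ((m : ℝ) : ℂ)⁻¹) * ((1:ℂ)/2/2) = 0 := by
      rw [← hcon]; ring
    rcases mul_eq_zero.1 this with h' | h'
    · linear_combination -h'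
    · norm_num at h'
  rcases smul_eq_zero.1 hsub with h' | h'
  · exact hscal h'
  · exact hz0 h'

lemma mink_continuous (hDo : IsOpen D) (h0 : (0:Fin n → ℂ) ∈ D)
    (hbal : ∀ z ∈ D, ∀ l : ℂ, ‖l‖ ≤ 1 → l • z ∈ D)
    {R : ℝ} (hR : 0 < R) (hDR : D ⊆ Metric.ball 0 R)
    (hext : ∀ a ∈ frontier D, ∀ φ : ℂ → (Fin n → ℂ),
      DifferentiableOn ℂ φ (Metric.ball 0 1) →
      Set.MapsTo φ (Metric.ball 0 1) (closure D) → φ 0 = a →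
      ∀ x ∈ Metric.ball (0 : ℂ) 1, φ x = a) :
    Continuous (mink D) := by
  rw [continuous_iff_lower_upperSemicontinuous]
  constructor
  · rw [lowerSemicontinuous_iff_isClosed_preimage]
    intro y
    rcases lt_trichotomy y 0 with hy | hy | hy
    · have : mink D ⁻¹' Iic y = ∅ := by
        ext z
        simp only [mem_preimage, mem_Iic, mem_empty_iff_false, iff_false, not_le]
        exact lt_of_lt_of_le hy (mink_nonneg hDo h0 z)
      rw [this]; exact isClosed_empty
    · subst hy
      have : mink D ⁻¹' Iic 0 = {0} := by
        ext z
        simp only [mem_preimage, mem_Iic, mem_singleton_iff]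
        constructor
        · intro hle
          exact (mink_eq_zero_iff hDo h0 hbal hR hDR).1
            (le_antisymm hle (mink_nonneg hDo h0 z))
        · rintro rfl
          rw [mink_zero hDo h0 hbal]
      rw [this]; exact isClosed_singleton
    · have : mink D ⁻¹' Iic y = (fun z : Fin n → ℂ => ((y:ℝ) : ℂ)⁻¹ • z) ⁻¹' closure D := by
        ext z
        simp only [mem_preimage, mem_Iic]
        have hnorm : ‖((y:ℝ) : ℂ)⁻¹‖ = y⁻¹ := by
          rw [norm_inv, Complex.norm_real, Real.norm_eq_abs, abs_of_pos hy]
        have hms : mink D (((y:ℝ) : ℂ)⁻¹ • z) = y⁻¹ * mink D z := by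
          rw [mink_smul hDo h0 hbal, hnorm]
        constructor
        · intro hle
          apply le_one_mem_closure hDo h0 hbal
          rw [hms]
          rw [inv_mul_le_iff₀ hy, mul_one]
          exact hle
        · intro hmem
          have := closure_subset_le_one hDo h0 hbal hR hDR hext hmem
          rw [hms, inv_mul_le_iff₀ hy, mul_one] at this
          exact this
      rw [this]
      exact isClosed_closure.preimage (continuous_const_smul _)
  · rw [upperSemicontinuous_iff_isOpen_preimage]
    intro y
    rcases le_or_gt y 0 with hy | hy
    · have : mink D ⁻¹' Iio y = ∅ := by
        ext z
        simp only [mem_preimage, mem_Iio, mem_empty_iff_false, iff_false, not_lt]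
        exact le_trans hy (mink_nonneg hDo h0 z)
      rw [this]; exact isOpen_empty
    · have : mink D ⁻¹' Iio y = (fun z : Fin n → ℂ => ((y:ℝ) : ℂ)⁻¹ • z) ⁻¹' D := by
        ext z
        simp only [mem_preimage, mem_Iio]
        exact mink_lt_iff hDo h0 hbal z hy
      rw [this]
      exact hDo.preimage (continuous_const_smul _)

noncomputable def mob (a z : ℂ) : ℂ := (z + a) / (1 + (starRingEnd ℂ a) * z)

lemma mob_key (a z : ℂ) :
    Complex.normSq (1 + (starRingEnd ℂ a) * z) - Complex.normSq (z + a) =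
      (1 - Complex.normSq a) * (1 - Complex.normSq z) := by
  simp only [Complex.normSq_apply, Complex.add_re, Complex.add_im, Complex.mul_re,
    Complex.mul_im, Complex.one_re, Complex.one_im, Complex.conj_re, Complex.conj_im]
  ring

lemma normSq_lt_one {z : ℂ} (h : ‖z‖ < 1) : Complex.normSq z < 1 := by
  rw [Complex.normSq_eq_norm_sq]
  nlinarith [norm_nonneg z]

lemma mob_denom_ne {a z : ℂ} (ha : ‖a‖ < 1) (hz : ‖z‖ < 1) :
    1 + (starRingEnd ℂ a) * z ≠ 0 := by
  intro hc
  have h1 : Complex.normSq (1 + (starRingEnd ℂ a) * z) = 0 := by rw [hc]; simp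
  have h2 := mob_key a z
  rw [h1] at h2
  have h3 := normSq_lt_one ha
  have h4 := normSq_lt_one hz
  nlinarith [Complex.normSq_nonneg (z + a)]

lemma mob_maps {a z : ℂ} (ha : ‖a‖ < 1) (hz : ‖z‖ < 1) : ‖mob a z‖ < 1 := by
  have hd := mob_denom_ne ha hz
  have h2 := mob_key a z
  have h3 := normSq_lt_one ha
  have h4 := normSq_lt_one hz
  have h5 : Complex.normSq (z + a) < Complex.normSq (1 + (starRingEnd ℂ a) * z) := by
    nlinarith
  rw [mob, norm_div, div_lt_one (norm_pos_iff.2 hd)]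
  rw [Complex.normSq_eq_norm_sq, Complex.normSq_eq_norm_sq] at h5
  nlinarith [norm_nonneg (z + a), norm_nonneg (1 + (starRingEnd ℂ a) * z)]

lemma mob_zero (a : ℂ) : mob a 0 = a := by simp [mob]

lemma mob_diff {a : ℂ} (ha : ‖a‖ < 1) :
    DifferentiableOn ℂ (mob a) (Metric.ball 0 1) := by
  intro z hz
  rw [mem_ball_zero_iff] at hz
  have h1 : DifferentiableAt ℂ (fun z : ℂ => z + a) z := differentiableAt_id.add_const a
  have h2 : DifferentiableAt ℂ (fun z : ℂ => 1 + (starRingEnd ℂ a) * z) z :=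
    (differentiableAt_const _).add ((differentiableAt_const _).mul differentiableAt_id)
  exact (h1.div h2 (mob_denom_ne ha hz)).differentiableWithinAt

lemma mob_surj {a w : ℂ} (ha : ‖a‖ < 1) (hw : ‖w‖ < 1) :
    ‖mob (-a) w‖ < 1 ∧ mob a (mob (-a) w) = w := by
  have hna : ‖-a‖ < 1 := by rwa [norm_neg]
  have h1 : ‖mob (-a) w‖ < 1 := mob_maps hna hw
  refine ⟨h1, ?_⟩
  have hd1 : 1 + (starRingEnd ℂ (-a)) * w ≠ 0 := mob_denom_ne hna hw
  have hd2 : 1 + (starRingEnd ℂ a) * (mob (-a) w) ≠ 0 := mob_denom_ne ha h1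
  have hd3 : 1 - (starRingEnd ℂ a) * a ≠ 0 := by
    intro hc
    have : (starRingEnd ℂ a) * a = 1 := by linear_combination -hc
    have hn : ‖(starRingEnd ℂ a) * a‖ = ‖a‖ * ‖a‖ := by
      rw [norm_mul, RCLike.norm_conj]
    rw [this] at hn
    simp only [norm_one] at hn
    nlinarith [norm_nonneg a]
  set b := starRingEnd ℂ a with hb
  have hu : mob (-a) w = (w - a) / (1 - b * w) := by
    simp only [mob, map_neg, neg_mul, hb]
    ring_nf
  have hd1' : 1 - b * w ≠ 0 := by
    simpa only [map_neg, neg_mul, ← sub_eq_add_neg] using hd1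
  have hd3' : 1 - b * a ≠ 0 := hd3
  rw [hu, mob]
  have hd4 : 1 + b * ((w - a) / (1 - b * w)) ≠ 0 := by
    rw [hu] at hd2
    exact hd2
  have hd5 : 1 - a * b ≠ 0 := by rwa [mul_comm] at hd3'
  have hnum : (w - a) / (1 - b * w) + a = (w * (1 - a * b)) / (1 - b * w) := by
    rw [div_add' _ _ _ hd1']
    congr 1
    ring
  have hden : 1 + b * ((w - a) / (1 - b * w)) = (1 - b * a) / (1 - b * w) := by
    field_simp
    ring
  rw [hnum, hden, div_div_div_cancel_right₀ hd1']
  rw [mul_comm a b]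
  exact mul_div_cancel_right₀ w hd3'

lemma max_principle (hDo : IsOpen D) (h0 : (0:Fin n → ℂ) ∈ D)
    (hbal : ∀ z ∈ D, ∀ l : ℂ, ‖l‖ ≤ 1 → l • z ∈ D)
    {R : ℝ} (hR : 0 < R) (hDR : D ⊆ Metric.ball 0 R)
    (hext : ∀ a ∈ frontier D, ∀ φ : ℂ → (Fin n → ℂ),
      DifferentiableOn ℂ φ (Metric.ball 0 1) →
      Set.MapsTo φ (Metric.ball 0 1) (closure D) → φ 0 = a →
      ∀ x ∈ Metric.ball (0 : ℂ) 1, φ x = a)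
    {H : ℂ → (Fin n → ℂ)} (hH : DifferentiableOn ℂ H (Metric.ball 0 1))
    {l₁ : ℂ} (hl₁ : l₁ ∈ Metric.ball (0:ℂ) 1)
    (hmax : ∀ lam ∈ Metric.ball (0:ℂ) 1, mink D (H lam) ≤ mink D (H l₁)) :
    ∀ lam ∈ Metric.ball (0:ℂ) 1, H lam = H l₁ := by
  set m := mink D (H l₁) with hm
  rcases le_or_gt m 0 with hm0 | hmpos
  · intro lam hlam
    have h1 : mink D (H lam) = 0 :=
      le_antisymm (le_trans (hmax lam hlam) hm0) (mink_nonneg hDo h0 _)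
    have h2 : mink D (H l₁) = 0 := le_antisymm hm0 (mink_nonneg hDo h0 _)
    rw [(mink_eq_zero_iff hDo h0 hbal hR hDR).1 h1,
      (mink_eq_zero_iff hDo h0 hbal hR hDR).1 h2]
  · have hl₁' : ‖l₁‖ < 1 := mem_ball_zero_iff.1 hl₁
    set K : ℂ → (Fin n → ℂ) := fun lam => ((m : ℝ) : ℂ)⁻¹ • H lam with hK
    have hminv : ‖((m : ℝ) : ℂ)⁻¹‖ = m⁻¹ := by
      rw [norm_inv, Complex.norm_real, Real.norm_eq_abs, abs_of_pos hmpos]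
    have hKmink : ∀ lam ∈ Metric.ball (0:ℂ) 1, mink D (K lam) ≤ 1 := by
      intro lam hlam
      rw [hK]
      simp only
      rw [mink_smul hDo h0 hbal, hminv, inv_mul_le_iff₀ hmpos, mul_one]
      exact hmax lam hlam
    have hKclos : ∀ lam ∈ Metric.ball (0:ℂ) 1, K lam ∈ closure D := fun lam hlam =>
      le_one_mem_closure hDo h0 hbal (hKmink lam hlam)
    set a := K l₁ with ha
    have hamink : mink D a = 1 := by
      rw [ha, hK]
      simp only
      rw [mink_smul hDo h0 hbal, hminv, ← hm, inv_mul_cancel₀ (ne_of_gt hmpos)]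
    have hafr : a ∈ frontier D := by
      rw [frontier, hDo.interior_eq]
      refine ⟨hKclos l₁ hl₁, ?_⟩
      rw [mink_mem_iff hDo h0 hbal, hamink]
      exact lt_irrefl 1
    set φ : ℂ → (Fin n → ℂ) := fun x => K (mob l₁ x) with hφ
    have hKdiff : DifferentiableOn ℂ K (Metric.ball 0 1) := hH.const_smul (((m : ℝ) : ℂ)⁻¹)
    have hφdiff : DifferentiableOn ℂ φ (Metric.ball 0 1) := by
      refine hKdiff.comp (mob_diff hl₁') ?_
      intro x hx
      rw [mem_ball_zero_iff] at hx ⊢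
      exact mob_maps hl₁' hx
    have hφmaps : Set.MapsTo φ (Metric.ball 0 1) (closure D) := by
      intro x hx
      rw [mem_ball_zero_iff] at hx
      exact hKclos _ (mem_ball_zero_iff.2 (mob_maps hl₁' hx))
    have hφ0 : φ 0 = a := by rw [hφ]; simp only [mob_zero]; rfl
    have hall := hext a hafr φ hφdiff hφmaps hφ0
    intro lam hlam
    have hlam' : ‖lam‖ < 1 := mem_ball_zero_iff.1 hlam
    obtain ⟨hu1, hu2⟩ := mob_surj hl₁' hlam'
    have := hall (mob (-l₁) lam) (mem_ball_zero_iff.2 hu1)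
    rw [hφ] at this
    simp only at this
    rw [hu2] at this
    have hKeq : K lam = K l₁ := this
    have hne : ((m : ℝ) : ℂ)⁻¹ ≠ 0 := by
      intro hc
      rw [hc] at hminv
      simp only [norm_zero] at hminv
      have : m⁻¹ > 0 := by positivity
      rw [← hminv] at this
      exact lt_irrefl 0 this
    exact smul_right_injective (Fin n → ℂ) hne hKeq


lemma schwarz_dslope (hDo : IsOpen D) (h0 : (0:Fin n → ℂ) ∈ D)
    (hbal : ∀ z ∈ D, ∀ l : ℂ, ‖l‖ ≤ 1 → l • z ∈ D)
    {R : ℝ} (hR : 0 < R) (hDR : D ⊆ Metric.ball 0 R)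
    (hext : ∀ a ∈ frontier D, ∀ φ : ℂ → (Fin n → ℂ),
      DifferentiableOn ℂ φ (Metric.ball 0 1) →
      Set.MapsTo φ (Metric.ball 0 1) (closure D) → φ 0 = a →
      ∀ x ∈ Metric.ball (0 : ℂ) 1, φ x = a)
    {F : ℂ → (Fin n → ℂ)} (hF : DifferentiableOn ℂ F (Metric.ball 0 1))
    (hFD : Set.MapsTo F (Metric.ball 0 1) D) (hF0 : F 0 = 0) :
    ∀ lam ∈ Metric.ball (0:ℂ) 1, mink D (dslope F 0 lam) ≤ 1 := by
  set G := dslope F 0 with hG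
  have hGdiff : DifferentiableOn ℂ G (Metric.ball 0 1) :=
    (Complex.differentiableOn_dslope (Metric.isOpen_ball.mem_nhds (mem_ball_self one_pos))).2 hF
  have hGF : ∀ lam : ℂ, lam ≠ 0 → F lam = lam • G lam := by
    intro lam hlam
    rw [hG, dslope_of_ne F hlam, slope_def_module, hF0, sub_zero, sub_zero, smul_smul,
      mul_inv_cancel₀ hlam, one_smul]
  intro lamh hlamh
  rw [mem_ball_zero_iff] at hlamh
  by_contra hq
  push_neg at hq
  set q := mink D (G lamh) with hqdef
  have hq1 : 1 < q := hq
  have hqpos : 0 < q := lt_trans one_pos hq1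
  set r := max ((‖lamh‖ + 1) / 2) ((q⁻¹ + 1) / 2) with hr
  have hqinv1 : q⁻¹ < 1 := by rw [inv_lt_one_iff₀]; right; exact hq1
  have hrlt1 : r < 1 := by
    rw [hr, max_lt_iff]
    exact ⟨by linarith, by linarith⟩
  have hrgt : ‖lamh‖ < r := by
    rw [hr]
    calc ‖lamh‖ < (‖lamh‖ + 1) / 2 := by linarith
      _ ≤ _ := le_max_left _ _
  have hrpos : 0 < r := lt_of_le_of_lt (norm_nonneg lamh) hrgt
  have hrq : q⁻¹ < r := by
    rw [hr]
    calc q⁻¹ < (q⁻¹ + 1) / 2 := by linarith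
      _ ≤ _ := le_max_right _ _
  have hKsub : Metric.closedBall (0:ℂ) r ⊆ Metric.ball (0:ℂ) 1 := by
    intro x hx
    rw [Metric.mem_closedBall] at hx
    rw [Metric.mem_ball]
    linarith
  have hcont : ContinuousOn (fun lam => mink D (G lam)) (Metric.closedBall (0:ℂ) r) :=
    (mink_continuous hDo h0 hbal hR hDR hext).comp_continuousOn
      (hGdiff.continuousOn.mono hKsub)
  obtain ⟨l₁, hl₁K, hl₁max⟩ := (isCompact_closedBall (0:ℂ) r).exists_isMaxOn
    ⟨0, Metric.mem_closedBall.2 (by simp [le_of_lt hrpos])⟩ hcont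
  have hlamhK : lamh ∈ Metric.closedBall (0:ℂ) r :=
    Metric.mem_closedBall.2 (by rw [dist_zero_right]; exact le_of_lt hrgt)
  have hql₁ : q ≤ mink D (G l₁) := hl₁max hlamhK
  have hfl₁pos : 0 < mink D (G l₁) := lt_of_lt_of_le hqpos hql₁
  have hl₁r : ‖l₁‖ ≤ r := by
    have := Metric.mem_closedBall.1 hl₁K
    rwa [dist_zero_right] at this
  have hcontra : mink D (G l₁) ≤ 1 / r := by
    by_contra hgt
    push_neg at hgt
    rcases eq_or_lt_of_le hl₁r with heq | hlt
    · -- max attained on the boundary circle : contradiction with F mapping into D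
      have hl₁ne : l₁ ≠ 0 := by
        intro hc
        rw [hc, norm_zero] at heq
        exact ne_of_gt hrpos heq.symm
      have hFl₁ : F l₁ ∈ D := hFD (mem_ball_zero_iff.2 (lt_of_le_of_lt hl₁r hrlt1))
      have h1 : mink D (F l₁) < 1 := (mink_mem_iff hDo h0 hbal _).1 hFl₁
      have h2 : F l₁ = l₁ • G l₁ := hGF l₁ hl₁ne
      rw [h2, mink_smul hDo h0 hbal, heq] at h1
      rw [div_lt_iff₀ hrpos] at hgt
      nlinarith
    · -- max attained at an interior point : G is constant, contradiction
      have hH : DifferentiableOn ℂ (fun mu : ℂ => G ((r:ℝ) * mu)) (Metric.ball 0 1) := by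
        refine hGdiff.comp ?_ ?_
        · exact ((differentiable_const _).mul differentiable_id).differentiableOn
        · intro x hx
          rw [mem_ball_zero_iff] at hx ⊢
          rw [norm_mul, Complex.norm_real, Real.norm_eq_abs, abs_of_pos hrpos]
          calc r * ‖x‖ < r * 1 := mul_lt_mul_of_pos_left hx hrpos
            _ < 1 := by rw [mul_one]; exact hrlt1
      have hrC : ((r:ℝ) : ℂ) ≠ 0 := by exact_mod_cast ne_of_gt hrpos
      have hl₁b : l₁ / ((r:ℝ) : ℂ) ∈ Metric.ball (0:ℂ) 1 := by
        rw [mem_ball_zero_iff, norm_div, Complex.norm_real, Real.norm_eq_abs,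
          abs_of_pos hrpos, div_lt_one hrpos]
        exact hlt
      have hrl₁ : ((r:ℝ) : ℂ) * (l₁ / ((r:ℝ) : ℂ)) = l₁ := by
        field_simp
      have hmax' : ∀ mu ∈ Metric.ball (0:ℂ) 1,
          mink D (G ((r:ℝ) * mu)) ≤ mink D (G ((r:ℝ) * (l₁ / ((r:ℝ) : ℂ)))) := by
        intro mu hmu
        rw [hrl₁]
        refine hl₁max (Metric.mem_closedBall.2 ?_)
        rw [dist_zero_right, norm_mul, Complex.norm_real, Real.norm_eq_abs,
          abs_of_pos hrpos]
        have : ‖mu‖ < 1 := mem_ball_zero_iff.1 hmu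
        nlinarith
      have hconst := max_principle hDo h0 hbal hR hDR hext hH hl₁b hmax'
      set f := mink D (G l₁) with hf
      have hgt' : 1 < f * r := by rw [div_lt_iff₀ hrpos] at hgt; exact hgt
      have hfinv : f⁻¹ < r := by
        have hh := inv_mul_cancel₀ (ne_of_gt hfl₁pos)
        nlinarith
      set t := (f⁻¹ + r) / 2 with ht
      have htpos : 0 < t := by
        have : 0 < f⁻¹ := by positivity
        rw [ht]; linarith
      have htr : t < r := by rw [ht]; linarith
      have htf : f⁻¹ < t := by rw [ht]; linarith
      have hmu : ((t/r : ℝ) : ℂ) ∈ Metric.ball (0:ℂ) 1 := by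
        rw [mem_ball_zero_iff, Complex.norm_real, Real.norm_eq_abs,
          abs_of_pos (by positivity), div_lt_one hrpos]
        exact htr
      have hGt := hconst _ hmu
      rw [hrl₁] at hGt
      have harg : ((r:ℝ) : ℂ) * ((t/r : ℝ) : ℂ) = ((t : ℝ) : ℂ) := by
        push_cast
        field_simp
      rw [harg] at hGt
      have htC : ((t:ℝ) : ℂ) ≠ 0 := by exact_mod_cast ne_of_gt htpos
      have hFt : F ((t:ℝ) : ℂ) ∈ D := by
        refine hFD (mem_ball_zero_iff.2 ?_)
        rw [Complex.norm_real, Real.norm_eq_abs, abs_of_pos htpos]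
        linarith
      have h3 : mink D (F ((t:ℝ) : ℂ)) < 1 := (mink_mem_iff hDo h0 hbal _).1 hFt
      rw [hGF _ htC, hGt, mink_smul hDo h0 hbal, Complex.norm_real, Real.norm_eq_abs,
        abs_of_pos htpos, ← hf] at h3
      have h4 := mul_lt_mul_of_pos_right htf hfl₁pos
      rw [inv_mul_cancel₀ (ne_of_gt hfl₁pos)] at h4
      linarith
  have h1r : q * r ≤ 1 := by
    have := le_trans hql₁ hcontra
    rw [le_div_iff₀ hrpos] at this
    exact this
  have h4 := mul_lt_mul_of_pos_right hrq hqpos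
  rw [inv_mul_cancel₀ (ne_of_gt hqpos)] at h4
  nlinarith

lemma core_facts (hDo : IsOpen D) (h0 : (0:Fin n → ℂ) ∈ D)
    (hbal : ∀ z ∈ D, ∀ l : ℂ, ‖l‖ ≤ 1 → l • z ∈ D)
    {R : ℝ} (hR : 0 < R) (hDR : D ⊆ Metric.ball 0 R)
    {ρ : (Fin n → ℂ) → (Fin n → ℂ)} (hρ : DifferentiableOn ℂ ρ D)
    (hρD : Set.MapsTo ρ D D) (hρ0 : ρ 0 = 0)
    {v : Fin n → ℂ} (hv : v ∈ D) (hv0 : v ≠ 0) :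
    0 < mink D v ∧ mink D v < 1 ∧
    (∀ lam ∈ Metric.ball (0:ℂ) 1, lam • (((mink D v : ℝ) : ℂ)⁻¹ • v) ∈ D) ∧
    DifferentiableOn ℂ (fun lam : ℂ => ρ (lam • (((mink D v : ℝ) : ℂ)⁻¹ • v)))
      (Metric.ball 0 1) := by
  have hm0 : 0 < mink D v := mink_pos hDo h0 hbal hR hDR hv0
  have hm1 : mink D v < 1 := (mink_mem_iff hDo h0 hbal v).1 hv
  have hcmink : mink D (((mink D v : ℝ) : ℂ)⁻¹ • v) = 1 := by
    rw [mink_smul hDo h0 hbal, norm_inv, Complex.norm_real, Real.norm_eq_abs,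
      abs_of_pos hm0, inv_mul_cancel₀ (ne_of_gt hm0)]
  have hmaps : ∀ lam ∈ Metric.ball (0:ℂ) 1, lam • (((mink D v : ℝ) : ℂ)⁻¹ • v) ∈ D := by
    intro lam hlam
    rw [mink_mem_iff hDo h0 hbal, mink_smul hDo h0 hbal, hcmink, mul_one]
    exact mem_ball_zero_iff.1 hlam
  refine ⟨hm0, hm1, hmaps, ?_⟩
  refine hρ.comp ?_ ?_
  · exact (differentiable_id.smul_const _).differentiableOn
  · exact hmaps

lemma part_forward (hDo : IsOpen D) (h0 : (0:Fin n → ℂ) ∈ D)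
    (hbal : ∀ z ∈ D, ∀ l : ℂ, ‖l‖ ≤ 1 → l • z ∈ D)
    {R : ℝ} (hR : 0 < R) (hDR : D ⊆ Metric.ball 0 R)
    (hext : ∀ a ∈ frontier D, ∀ φ : ℂ → (Fin n → ℂ),
      DifferentiableOn ℂ φ (Metric.ball 0 1) →
      Set.MapsTo φ (Metric.ball 0 1) (closure D) → φ 0 = a →
      ∀ x ∈ Metric.ball (0 : ℂ) 1, φ x = a)
    {ρ : (Fin n → ℂ) → (Fin n → ℂ)} (hρ : DifferentiableOn ℂ ρ D)
    (hρD : Set.MapsTo ρ D D) (hρ0 : ρ 0 = 0)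
    {v : Fin n → ℂ} (hv : v ∈ D) (hρv : ρ v = v) :
    fderiv ℂ ρ 0 v = v := by
  rcases eq_or_ne v 0 with rfl | hv0
  · exact (fderiv ℂ ρ 0).map_zero
  obtain ⟨hm0, hm1, hmaps, hFdiff⟩ :=
    core_facts hDo h0 hbal hR hDR hρ hρD hρ0 hv hv0
  set m := mink D v with hmdef
  set c : Fin n → ℂ := ((m : ℝ) : ℂ)⁻¹ • v with hc
  set F : ℂ → (Fin n → ℂ) := fun lam => ρ (lam • c) with hF
  have hmC : ((m : ℝ) : ℂ) ≠ 0 := by exact_mod_cast ne_of_gt hm0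
  have hF0 : F 0 = 0 := by rw [hF]; simp only [zero_smul, hρ0]
  have hFD : Set.MapsTo F (Metric.ball 0 1) D := fun lam hlam => hρD (hmaps lam hlam)
  set G := dslope F 0 with hG
  have hGdiff : DifferentiableOn ℂ G (Metric.ball 0 1) :=
    (Complex.differentiableOn_dslope (Metric.isOpen_ball.mem_nhds (mem_ball_self one_pos))).2
      hFdiff
  have hA := schwarz_dslope hDo h0 hbal hR hDR hext hFdiff hFD hF0
  have hmball : ((m : ℝ) : ℂ) ∈ Metric.ball (0:ℂ) 1 := by
    rw [mem_ball_zero_iff, Complex.norm_real, Real.norm_eq_abs, abs_of_pos hm0]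
    exact hm1
  have hmc : ((m : ℝ) : ℂ) • c = v := by
    rw [hc, smul_smul, mul_inv_cancel₀ hmC, one_smul]
  have hFm : F ((m : ℝ) : ℂ) = v := by rw [hF]; simp only [hmc]; exact hρv
  have hGm : G ((m : ℝ) : ℂ) = ((m : ℝ) : ℂ)⁻¹ • v := by
    rw [hG, dslope_of_ne F hmC, slope_def_module, hF0, sub_zero, sub_zero, hFm]
  have hGmmink : mink D (G ((m : ℝ) : ℂ)) = 1 := by
    rw [hGm, mink_smul hDo h0 hbal, norm_inv, Complex.norm_real, Real.norm_eq_abs,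
      abs_of_pos hm0, ← hmdef, inv_mul_cancel₀ (ne_of_gt hm0)]
  have hmax : ∀ lam ∈ Metric.ball (0:ℂ) 1, mink D (G lam) ≤ mink D (G ((m : ℝ) : ℂ)) := by
    intro lam hlam
    rw [hGmmink]
    exact hA lam hlam
  have hconst := max_principle hDo h0 hbal hR hDR hext hGdiff hmball hmax
  have hG0 : G 0 = G ((m : ℝ) : ℂ) := hconst 0 (mem_ball_self one_pos)
  have hderiv : HasDerivAt F (fderiv ℂ ρ 0 c) 0 := by
    have hinner : HasDerivAt (fun lam : ℂ => lam • c) c 0 := by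
      have := (hasDerivAt_id (0:ℂ)).smul_const c
      simpa using this
    have houter : HasFDerivAt ρ (fderiv ℂ ρ 0) ((fun lam : ℂ => lam • c) 0) := by
      simp only [zero_smul]
      exact (hρ.differentiableAt (hDo.mem_nhds h0)).hasFDerivAt
    have := houter.comp_hasDerivAt 0 hinner
    exact this
  have hG0' : G 0 = fderiv ℂ ρ 0 c := by
    rw [hG, dslope_same]
    exact hderiv.deriv
  have hkey : fderiv ℂ ρ 0 c = ((m : ℝ) : ℂ)⁻¹ • v := by rw [← hG0', hG0, hGm]
  have hkey2 : ((m : ℝ) : ℂ)⁻¹ • fderiv ℂ ρ 0 v = ((m : ℝ) : ℂ)⁻¹ • v := by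
    rw [← hkey, hc, map_smul]
  exact smul_right_injective (Fin n → ℂ) (inv_ne_zero hmC) hkey2

lemma part_backward (hDo : IsOpen D) (h0 : (0:Fin n → ℂ) ∈ D)
    (hbal : ∀ z ∈ D, ∀ l : ℂ, ‖l‖ ≤ 1 → l • z ∈ D)
    {R : ℝ} (hR : 0 < R) (hDR : D ⊆ Metric.ball 0 R)
    (hext : ∀ a ∈ frontier D, ∀ φ : ℂ → (Fin n → ℂ),
      DifferentiableOn ℂ φ (Metric.ball 0 1) →
      Set.MapsTo φ (Metric.ball 0 1) (closure D) → φ 0 = a →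
      ∀ x ∈ Metric.ball (0 : ℂ) 1, φ x = a)
    {ρ : (Fin n → ℂ) → (Fin n → ℂ)} (hρ : DifferentiableOn ℂ ρ D)
    (hρD : Set.MapsTo ρ D D) (hρ0 : ρ 0 = 0)
    {v : Fin n → ℂ} (hv : v ∈ D) (hPv : fderiv ℂ ρ 0 v = v) :
    ρ v = v := by
  rcases eq_or_ne v 0 with rfl | hv0
  · exact hρ0
  obtain ⟨hm0, hm1, hmaps, hFdiff⟩ :=
    core_facts hDo h0 hbal hR hDR hρ hρD hρ0 hv hv0
  set m := mink D v with hmdef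
  set c : Fin n → ℂ := ((m : ℝ) : ℂ)⁻¹ • v with hc
  set F : ℂ → (Fin n → ℂ) := fun lam => ρ (lam • c) with hF
  have hmC : ((m : ℝ) : ℂ) ≠ 0 := by exact_mod_cast ne_of_gt hm0
  have hF0 : F 0 = 0 := by rw [hF]; simp only [zero_smul, hρ0]
  have hFD : Set.MapsTo F (Metric.ball 0 1) D := fun lam hlam => hρD (hmaps lam hlam)
  set G := dslope F 0 with hG
  have hGdiff : DifferentiableOn ℂ G (Metric.ball 0 1) :=
    (Complex.differentiableOn_dslope (Metric.isOpen_ball.mem_nhds (mem_ball_self one_pos))).2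
      hFdiff
  have hA := schwarz_dslope hDo h0 hbal hR hDR hext hFdiff hFD hF0
  have hmball : ((m : ℝ) : ℂ) ∈ Metric.ball (0:ℂ) 1 := by
    rw [mem_ball_zero_iff, Complex.norm_real, Real.norm_eq_abs, abs_of_pos hm0]
    exact hm1
  have hmc : ((m : ℝ) : ℂ) • c = v := by
    rw [hc, smul_smul, mul_inv_cancel₀ hmC, one_smul]
  have hderiv : HasDerivAt F (fderiv ℂ ρ 0 c) 0 := by
    have hinner : HasDerivAt (fun lam : ℂ => lam • c) c 0 := by
      have := (hasDerivAt_id (0:ℂ)).smul_const c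
      simpa using this
    have houter : HasFDerivAt ρ (fderiv ℂ ρ 0) ((fun lam : ℂ => lam • c) 0) := by
      simp only [zero_smul]
      exact (hρ.differentiableAt (hDo.mem_nhds h0)).hasFDerivAt
    have := houter.comp_hasDerivAt 0 hinner
    exact this
  have hG0 : G 0 = ((m : ℝ) : ℂ)⁻¹ • v := by
    rw [hG, dslope_same, hderiv.deriv, hc, map_smul, hPv]
  have hG0mink : mink D (G 0) = 1 := by
    rw [hG0, mink_smul hDo h0 hbal, norm_inv, Complex.norm_real, Real.norm_eq_abs,
      abs_of_pos hm0, ← hmdef, inv_mul_cancel₀ (ne_of_gt hm0)]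
  have hmax : ∀ lam ∈ Metric.ball (0:ℂ) 1, mink D (G lam) ≤ mink D (G 0) := by
    intro lam hlam
    rw [hG0mink]
    exact hA lam hlam
  have hconst := max_principle hDo h0 hbal hR hDR hext hGdiff (mem_ball_self one_pos) hmax
  have hGm : G ((m : ℝ) : ℂ) = ((m : ℝ) : ℂ)⁻¹ • v := by
    rw [hconst _ hmball, hG0]
  have hFm : F ((m : ℝ) : ℂ) = v := by
    have h1 : G ((m : ℝ) : ℂ) = ((m : ℝ) : ℂ)⁻¹ • F ((m : ℝ) : ℂ) := by
      rw [hG, dslope_of_ne F hmC, slope_def_module, hF0, sub_zero, sub_zero]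
    rw [h1] at hGm
    have := smul_right_injective (Fin n → ℂ) (inv_ne_zero hmC) hGm
    exact this
  rw [hF] at hFm
  simp only [hmc] at hFm
  exact hFm

end

/-- For a bounded balanced pseudoconvex domain `D ⊆ ℂⁿ` all of whose
boundary points are holomorphically extreme, and a holomorphic retraction `ρ : D → D`
with `ρ(0) = 0`, the image of `ρ` equals `D ∩ V` where `V = {v : ρ'(0)v = v}` is a
complex-linear subspace. -/
theorem stmt_18 {n : ℕ} (D : Set (Fin n → ℂ)) (hDo : IsOpen D) (hDc : IsConnected D)
    (hDb : Bornology.IsBounded D)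
    (hbal : ∀ z ∈ D, ∀ l : ℂ, ‖l‖ ≤ 1 → l • z ∈ D)
    (hpsc : Pseudoconvex D)
    (hext : ∀ a ∈ frontier D, ∀ φ : ℂ → (Fin n → ℂ),
      DifferentiableOn ℂ φ (Metric.ball 0 1) →
      Set.MapsTo φ (Metric.ball 0 1) (closure D) → φ 0 = a →
      ∀ x ∈ Metric.ball (0 : ℂ) 1, φ x = a)
    (ρ : (Fin n → ℂ) → (Fin n → ℂ)) (hρ : DifferentiableOn ℂ ρ D)
    (hρD : Set.MapsTo ρ D D) (hretr : ∀ z ∈ D, ρ (ρ z) = ρ z) (hρ0 : ρ 0 = 0) :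
    ρ '' D = D ∩ {v : Fin n → ℂ | fderiv ℂ ρ 0 v = v} := by
  obtain ⟨z₀, hz₀⟩ := hDc.nonempty
  have h0 : (0 : Fin n → ℂ) ∈ D := by
    have := hbal z₀ hz₀ 0 (by simp)
    simpa using this
  obtain ⟨R₀, hR₀⟩ := hDb.subset_closedBall 0
  set R := max R₀ 0 + 1 with hRdef
  have hR : 0 < R := by
    have : (0:ℝ) ≤ max R₀ 0 := le_max_right _ _
    rw [hRdef]; linarith
  have hDR : D ⊆ Metric.ball 0 R := by
    intro x hx
    have := hR₀ hx
    rw [Metric.mem_closedBall] at this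
    rw [Metric.mem_ball]
    have h1 : R₀ ≤ max R₀ 0 := le_max_left _ _
    rw [hRdef]; linarith
  apply Set.Subset.antisymm
  · rintro _ ⟨z, hz, rfl⟩
    exact ⟨hρD hz,
      part_forward hDo h0 hbal hR hDR hext hρ hρD hρ0 (hρD hz) (hretr z hz)⟩
  · rintro v ⟨hvD, hvV⟩
    exact ⟨v, hvD, part_backward hDo h0 hbal hR hDR hext hρ hρD hρ0 hvD hvV⟩
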